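/- Let A = (a_{ij}) and B = (b_{ij}) be n×n generalized tournament matrices with equal corresponding principal minors of orders 2 and 3. If a_{ij} = 1 - b_{ij} with a_{ij} ≠ 1/2, and a_{ik} = b_{ik} ≠ 1/2 and a_{jk} = b_{jk} ≠ 1/2, then a_{ik} = a_{jk} = b_{ik} = b_{jk}. -/
import Mathlib

def IsGTM {n : ℕ} (M : Matrix (Fin n) (Fin n) ℝ) : Prop :=
  (∀ i j, 0 ≤ M i j) ∧ M + M.transpose = (Matrix.of fun _ _ => (1 : ℝ)) - 1

/-- Equality of principal minors over index sets of the given cardinalities. -/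
def SameMinors {n : ℕ} (A B : Matrix (Fin n) (Fin n) ℝ) (P : ℕ → Prop) : Prop :=
  ∀ S : Finset (Fin n), P S.card →
    (A.submatrix (fun i : ↥S => (i : Fin n)) (fun i : ↥S => (i : Fin n))).det =
      (B.submatrix (fun i : ↥S => (i : Fin n)) (fun i : ↥S => (i : Fin n))).det

lemma gtm_entries {n : ℕ} {M : Matrix (Fin n) (Fin n) ℝ} (hM : IsGTM M) :
    (∀ p, M p p = 0) ∧ ∀ p q : Fin n, p ≠ q → M q p = 1 - M p q := by
  constructor
  · intro p
    have := congrFun (congrFun hM.2 p) p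
    simp [Matrix.add_apply, Matrix.transpose_apply, Matrix.one_apply, Matrix.sub_apply] at this
    linarith
  · intro p q hpq
    have := congrFun (congrFun hM.2 p) q
    simp [Matrix.add_apply, Matrix.transpose_apply, Matrix.one_apply, Matrix.sub_apply, hpq] at this
    linarith

lemma det_principal_three {n : ℕ} (M : Matrix (Fin n) (Fin n) ℝ) (i j k : Fin n)
    (hij : i ≠ j) (hik : i ≠ k) (hjk : j ≠ k) :
    (M.submatrix (fun x : ↥({i, j, k} : Finset (Fin n)) => (x : Fin n))
        (fun x : ↥({i, j, k} : Finset (Fin n)) => (x : Fin n))).det =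
      (M.submatrix ![i, j, k] ![i, j, k]).det := by
  set S : Finset (Fin n) := {i, j, k}
  have hmem : ∀ x : Fin 3, (![i, j, k] x) ∈ S := by
    intro x; fin_cases x <;> simp [S]
  have hcard : S.card = 3 := by
    rw [show S = {i,j,k} from rfl]
    rw [Finset.card_insert_of_notMem (by simp [hij, hik]),
        Finset.card_insert_of_notMem (by simp [hjk])]
    simp
  have hinj : Function.Injective (fun x : Fin 3 => (⟨![i, j, k] x, hmem x⟩ : ↥S)) := by
    intro x y hxy
    have : (![i, j, k] x) = ![i, j, k] y := congrArg Subtype.val hxy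
    fin_cases x <;> fin_cases y <;> simp_all
  have hbij : Function.Bijective (fun x : Fin 3 => (⟨![i, j, k] x, hmem x⟩ : ↥S)) := by
    rw [Fintype.bijective_iff_injective_and_card]
    refine ⟨hinj, ?_⟩
    simp [hcard]
  let e : Fin 3 ≃ ↥S := Equiv.ofBijective _ hbij
  have := Matrix.det_submatrix_equiv_self e
      (M.submatrix (fun x : ↥S => (x : Fin n)) (fun x : ↥S => (x : Fin n)))
  rw [← this]
  congr 1

theorem stmt8 {n : ℕ} (A B : Matrix (Fin n) (Fin n) ℝ)
    (hA : IsGTM A) (hB : IsGTM B)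
    (hmin : SameMinors A B (fun k => k = 2 ∨ k = 3))
    (i j k : Fin n) (hij : i ≠ j) (hik : i ≠ k) (hjk : j ≠ k)
    (h1 : A i j = 1 - B i j) (h1' : A i j ≠ 1 / 2)
    (h2 : A i k = B i k) (h2' : A i k ≠ 1 / 2)
    (h3 : A j k = B j k) (h3' : A j k ≠ 1 / 2) :
    A i k = A j k ∧ A i k = B i k ∧ A j k = B j k := by
  obtain ⟨hAd, hAo⟩ := gtm_entries hA
  obtain ⟨hBd, hBo⟩ := gtm_entries hB
  have hcard : ({i, j, k} : Finset (Fin n)).card = 3 := by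
    rw [Finset.card_insert_of_notMem (by simp [hij, hik]),
        Finset.card_insert_of_notMem (by simp [hjk])]
    simp
  have heq := hmin {i, j, k} (by rw [hcard]; right; rfl)
  rw [det_principal_three A i j k hij hik hjk, det_principal_three B i j k hij hik hjk] at heq
  simp only [Matrix.det_fin_three] at heq
  simp only [Matrix.submatrix_apply, Matrix.cons_val_zero, Matrix.cons_val_one,
    Matrix.head_cons, Matrix.cons_val_two, Matrix.tail_cons] at heq
  rw [hAd i, hAd j, hAd k, hBd i, hBd j, hBd k,
      hAo i j hij, hAo i k hik, hAo j k hjk,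
      hBo i j hij, hBo i k hik, hBo j k hjk] at heq
  have hBij : B i j = 1 - A i j := by linarith
  rw [hBij, ← h2, ← h3] at heq
  have key : (2 * A i j - 1) * (A j k - A i k) = 0 := by linear_combination heq
  rcases mul_eq_zero.1 key with h | h
  · exact absurd (by linarith : A i j = 1/2) h1'
  · exact ⟨by linarith, h2, h3⟩
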